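/- The s-dimensional Hausdorff measure of the ternary Cantor set equals 1, where s = log 2 / log 3. -/

import Mathlib

open MeasureTheory Set
open scoped ENNReal NNReal

namespace CantorAux

noncomputable def s : ℝ := Real.log 2 / Real.log 3

lemma log3_pos : (0:ℝ) < Real.log 3 := Real.log_pos (by norm_num)

lemma s_pos : 0 < s := div_pos (Real.log_pos (by norm_num)) log3_pos

lemma s_lt_one : s < 1 := by
  rw [s, div_lt_one log3_pos]
  exact Real.log_lt_log (by norm_num) (by norm_num)

lemma s_le_one : s ≤ 1 := s_lt_one.le

lemma rpow_s_3 : (3:ℝ) ^ s = 2 := by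
  rw [s, Real.rpow_def_of_pos (by norm_num)]
  rw [mul_div_assoc']
  rw [mul_comm, mul_div_assoc, div_self log3_pos.ne', mul_one, Real.exp_log (by norm_num)]

-- key concavity inequality
lemma key_ineq {a b : ℝ} (ha : 0 ≤ a) (hb : 0 ≤ b) (ha' : a ≤ 1/3) (hb' : b ≤ 1/3) :
    a ^ s + b ^ s ≤ (a + b + 1/3) ^ s := by
  have h2 : (a ^ s + b ^ s) / 2 ≤ ((a + b)/2) ^ s := by
    have hz : ∀ i ∈ (Finset.univ : Finset (Fin 2)), 0 ≤ (![a, b] i) ^ s :=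
      fun i _ => Real.rpow_nonneg (by fin_cases i <;> simpa) s
    have hp : 1 ≤ 1/s := by
      rw [one_div, one_le_inv_iff₀]; exact ⟨s_pos, s_lt_one.le⟩
    have H := Real.arith_mean_le_rpow_mean (ι := Fin 2) Finset.univ
      (fun _ => (2:ℝ)⁻¹) (fun i => (![a, b] i) ^ s)
      (fun i _ => by norm_num) (by simp) hz hp
    simp only [Fin.sum_univ_two, Matrix.cons_val_zero, Matrix.cons_val_one, Matrix.head_cons,
      one_div, inv_inv, Real.rpow_rpow_inv ha s_pos.ne',
      Real.rpow_rpow_inv hb s_pos.ne'] at H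
    calc (a ^ s + b ^ s) / 2 = 2⁻¹ * a ^ s + 2⁻¹ * b ^ s := by ring
    _ ≤ (2⁻¹ * a + 2⁻¹ * b) ^ s := H
    _ = ((a + b)/2) ^ s := by ring_nf
  have ht0 : 0 ≤ (a + b)/2 := by linarith
  calc a ^ s + b ^ s ≤ 2 * ((a + b)/2) ^ s := by linarith
  _ = (3:ℝ) ^ s * ((a + b)/2) ^ s := by rw [rpow_s_3]
  _ = (3 * ((a + b)/2)) ^ s := (Real.mul_rpow (by norm_num) ht0).symm
  _ ≤ (a + b + 1/3) ^ s := by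
      apply Real.rpow_le_rpow (by linarith) (by linarith) s_pos.le

noncomputable def w (n : ℕ) : ℝ := (3:ℝ)⁻¹ ^ n

lemma w_pos (n : ℕ) : 0 < w n := pow_pos (by norm_num) n

lemma w_succ (n : ℕ) : w (n+1) = w n / 3 := by
  simp [w, pow_succ]; ring

lemma w_le_one (n : ℕ) : w n ≤ 1 := pow_le_one₀ (by norm_num) (by norm_num)

noncomputable def E : ℕ → Finset ℝ
  | 0 => {0}
  | (n+1) => (E n).image (fun a => a/3) ∪ (E n).image (fun a => (2+a)/3)

lemma E_bounds {n : ℕ} {a : ℝ} (h : a ∈ E n) : 0 ≤ a ∧ a + w n ≤ 1 := by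
  induction n generalizing a with
  | zero => simp [E] at h; subst h; simp [w]
  | succ n ih =>
    simp only [E, Finset.mem_union, Finset.mem_image] at h
    rw [w_succ]
    rcases h with ⟨b, hb, rfl⟩ | ⟨b, hb, rfl⟩ <;> rcases ih hb with ⟨h1, h2⟩ <;>
      constructor <;> linarith

lemma E_card (n : ℕ) : (E n).card ≤ 2 ^ n := by
  induction n with
  | zero => simp [E]
  | succ n ih =>
    calc (E (n+1)).card ≤ ((E n).image (fun a => a/3)).card
        + ((E n).image (fun a => (2+a)/3)).card := Finset.card_union_le _ _
    _ ≤ (E n).card + (E n).card := add_le_add (Finset.card_image_le) (Finset.card_image_le)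
    _ ≤ 2 ^ n + 2 ^ n := add_le_add ih ih
    _ = 2 ^ (n+1) := by ring

lemma div3_mem_cantorSet {x : ℝ} (h : x ∈ cantorSet) : x / 3 ∈ cantorSet := by
  have h' : ∀ n, x ∈ preCantorSet n := fun n => Set.mem_iInter.1 h n
  rw [cantorSet, Set.mem_iInter]
  intro n
  cases n with
  | zero =>
    have := cantorSet_subset_unitInterval h
    simp only [preCantorSet_zero]
    constructor <;> [linarith [this.1]; linarith [this.2]]
  | succ n => exact Or.inl ⟨x, h' n, rfl⟩

lemma add_two_div3_mem_cantorSet {x : ℝ} (h : x ∈ cantorSet) : (2 + x) / 3 ∈ cantorSet := by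
  have h' : ∀ n, x ∈ preCantorSet n := fun n => Set.mem_iInter.1 h n
  rw [cantorSet, Set.mem_iInter]
  intro n
  cases n with
  | zero =>
    have := cantorSet_subset_unitInterval h
    simp only [preCantorSet_zero]
    constructor <;> [linarith [this.1]; linarith [this.2]]
  | succ n => exact Or.inr ⟨x, h' n, rfl⟩

lemma E_mem_cantorSet {n : ℕ} {a : ℝ} (h : a ∈ E n) : a ∈ cantorSet := by
  induction n generalizing a with
  | zero => simp [E] at h; subst h; exact zero_mem_cantorSet
  | succ n ih =>
    simp only [E, Finset.mem_union, Finset.mem_image] at h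
    rcases h with ⟨b, hb, rfl⟩ | ⟨b, hb, rfl⟩
    · exact div3_mem_cantorSet (ih hb)
    · exact add_two_div3_mem_cantorSet (ih hb)

lemma preCantorSet_subset_union (n : ℕ) :
    preCantorSet n ⊆ ⋃ a ∈ (E n : Set ℝ), Icc a (a + w n) := by
  induction n with
  | zero =>
    intro x hx
    simp only [preCantorSet_zero] at hx
    refine Set.mem_iUnion₂.2 ⟨0, ?_, ?_⟩
    · simp [E]
    · simpa [w] using hx
  | succ n ih =>
    rintro x (⟨y, hy, rfl⟩ | ⟨y, hy, rfl⟩)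
    · obtain ⟨a, ha, h1, h2⟩ := Set.mem_iUnion₂.1 (ih hy)
      refine Set.mem_iUnion₂.2 ⟨a/3, ?_, ?_, ?_⟩
      · simp only [E, Finset.coe_union, Finset.coe_image, Set.mem_union, Set.mem_image]
        exact Or.inl ⟨a, ha, rfl⟩
      · simp only []; linarith
      · rw [w_succ]; simp only []; linarith
    · obtain ⟨a, ha, h1, h2⟩ := Set.mem_iUnion₂.1 (ih hy)
      refine Set.mem_iUnion₂.2 ⟨(2+a)/3, ?_, ?_, ?_⟩
      · simp only [E, Finset.coe_union, Finset.coe_image, Set.mem_union, Set.mem_image]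
        exact Or.inr ⟨a, ha, rfl⟩
      · simp only []; linarith
      · rw [w_succ]; simp only []; linarith

open Classical in
noncomputable def N (n : ℕ) (c d : ℝ) : ℕ :=
  ((E n).filter (fun a => c ≤ a ∧ a + w n ≤ d)).card

open Classical in
lemma N_pos_imp {n : ℕ} {c d : ℝ} (h : N n c d ≠ 0) : c + w n ≤ d := by
  rw [N] at h
  obtain ⟨a, ha⟩ := Finset.card_pos.1 (Nat.pos_of_ne_zero h)
  rw [Finset.mem_filter] at ha
  obtain ⟨-, h1, h2⟩ := ha
  linarith

open Classical in
lemma count_le : ∀ (n : ℕ) (c d : ℝ), c ≤ d → (N n c d : ℝ) ≤ 2 ^ n * (d - c) ^ s := by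
  intro n
  induction n with
  | zero =>
    intro c d hcd
    by_cases h : N 0 c d = 0
    · have h0 : (0:ℝ) ≤ 2 ^ 0 * (d - c) ^ s := by
        rw [pow_zero, one_mul]; exact Real.rpow_nonneg (by linarith) s
      simpa [h] using h0
    · have h1 : c + 1 ≤ d := by simpa [w] using N_pos_imp h
      have h2 : (N 0 c d : ℝ) ≤ 1 := by
        have : N 0 c d ≤ (E 0).card := Finset.card_filter_le _ _
        simp [E] at this
        exact_mod_cast this
      calc (N 0 c d : ℝ) ≤ 1 := h2
      _ = 1 ^ s := (Real.one_rpow s).symm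
      _ ≤ (d - c) ^ s := Real.rpow_le_rpow (by norm_num) (by linarith) s_pos.le
      _ = 2 ^ 0 * (d - c) ^ s := by ring
  | succ n ih =>
    intro c d hcd
    set c₁ := max (3*c) 0 with hc₁
    set d₁ := min (3*d) 1 with hd₁
    set c₂ := max (3*c - 2) 0 with hc₂
    set d₂ := min (3*d - 2) 1 with hd₂
    -- main splitting bound
    have main : N (n+1) c d ≤ N n c₁ d₁ + N n c₂ d₂ := by
      rw [N]
      show ((((E n).image (fun a => a/3)) ∪ ((E n).image (fun a => (2+a)/3))).filter
        (fun a => c ≤ a ∧ a + w (n+1) ≤ d)).card ≤ _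
      rw [Finset.filter_union]
      refine (Finset.card_union_le _ _).trans (add_le_add ?_ ?_)
      · rw [Finset.filter_image]
        refine (Finset.card_image_le).trans (Finset.card_le_card ?_)
        intro a ha
        rw [Finset.mem_filter] at ha ⊢
        obtain ⟨haE, h1, h2⟩ := ha
        obtain ⟨hb1, hb2⟩ := E_bounds haE
        rw [w_succ] at h2
        refine ⟨haE, max_le (by linarith) hb1, le_min (by linarith) (by linarith)⟩
      · rw [Finset.filter_image]
        refine (Finset.card_image_le).trans (Finset.card_le_card ?_)
        intro a ha
        rw [Finset.mem_filter] at ha ⊢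
        obtain ⟨haE, h1, h2⟩ := ha
        obtain ⟨hb1, hb2⟩ := E_bounds haE
        rw [w_succ] at h2
        refine ⟨haE, max_le (by linarith) hb1, le_min (by linarith) (by linarith)⟩
    have hrpow_nonneg : (0:ℝ) ≤ (d - c) ^ s := Real.rpow_nonneg (by linarith) s
    by_cases h1 : N n c₁ d₁ = 0 <;> by_cases h2 : N n c₂ d₂ = 0
    · -- both empty
      have hNl : (N (n+1) c d : ℝ) ≤ 0 := by
        have := main; rw [h1, h2] at this; exact_mod_cast this
      nlinarith [pow_pos (show (0:ℝ) < 2 by norm_num) (n+1)]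
    · -- only branch 2
      have hw2 := N_pos_imp h2
      have hcd2 : c₂ ≤ d₂ := by linarith [w_pos n]
      have hle : d₂ - c₂ ≤ 3 * (d - c) := by
        have := min_le_left (3*d - 2) 1
        have := le_max_left (3*c - 2) 0
        simp only [hc₂, hd₂]
        linarith [min_le_left (3*d - 2) 1, le_max_left (3*c - 2) 0]
      calc (N (n+1) c d : ℝ) ≤ N n c₂ d₂ := by
            have := main; rw [h1, Nat.zero_add] at this; exact_mod_cast this
      _ ≤ 2 ^ n * (d₂ - c₂) ^ s := ih c₂ d₂ hcd2
      _ ≤ 2 ^ n * (3 * (d - c)) ^ s := by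
            have : (d₂ - c₂) ^ s ≤ (3 * (d - c)) ^ s :=
              Real.rpow_le_rpow (by linarith) hle s_pos.le
            nlinarith [pow_pos (show (0:ℝ) < 2 by norm_num) n]
      _ = 2 ^ (n+1) * (d - c) ^ s := by
            rw [Real.mul_rpow (by norm_num) (by linarith), rpow_s_3]; ring
    · -- only branch 1
      have hw1 := N_pos_imp h1
      have hcd1 : c₁ ≤ d₁ := by linarith [w_pos n]
      have hle : d₁ - c₁ ≤ 3 * (d - c) := by
        simp only [hc₁, hd₁]
        linarith [min_le_left (3*d) 1, le_max_left (3*c) 0]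
      calc (N (n+1) c d : ℝ) ≤ N n c₁ d₁ := by
            have := main; rw [h2, Nat.add_zero] at this; exact_mod_cast this
      _ ≤ 2 ^ n * (d₁ - c₁) ^ s := ih c₁ d₁ hcd1
      _ ≤ 2 ^ n * (3 * (d - c)) ^ s := by
            have : (d₁ - c₁) ^ s ≤ (3 * (d - c)) ^ s :=
              Real.rpow_le_rpow (by linarith) hle s_pos.le
            nlinarith [pow_pos (show (0:ℝ) < 2 by norm_num) n]
      _ = 2 ^ (n+1) * (d - c) ^ s := by
            rw [Real.mul_rpow (by norm_num) (by linarith), rpow_s_3]; ring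
    · -- both branches nonempty
      have hw1 := N_pos_imp h1
      have hw2 := N_pos_imp h2
      have hwp := w_pos n
      set α := (d₁ - c₁)/3 with hα
      set β := (d₂ - c₂)/3 with hβ
      have hα0 : 0 ≤ α := by simp only [hα]; linarith
      have hβ0 : 0 ≤ β := by simp only [hβ]; linarith
      have hα1 : α ≤ 1/3 := by
        have h1' : d₁ ≤ 1 := min_le_right _ _
        have h2' : 0 ≤ c₁ := le_max_right _ _
        simp only [hα]; linarith
      have hβ1 : β ≤ 1/3 := by
        have h1' : d₂ ≤ 1 := min_le_right _ _
        have h2' : 0 ≤ c₂ := le_max_right _ _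
        simp only [hβ]; linarith
      have hsum : α + β + 1/3 ≤ d - c := by
        have e1 : d₁ ≤ 1 := min_le_right _ _
        have e2 : 3*c ≤ c₁ := le_max_left _ _
        have e3 : d₂ ≤ 3*d - 2 := min_le_left _ _
        have e4 : 0 ≤ c₂ := le_max_right _ _
        simp only [hα, hβ]; linarith
      have key := key_ineq hα0 hβ0 hα1 hβ1
      have h3α : d₁ - c₁ = 3 * α := by simp only [hα]; ring
      have h3β : d₂ - c₂ = 3 * β := by simp only [hβ]; ring
      have hp2 : (0:ℝ) < 2 ^ n := pow_pos (by norm_num) n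
      calc (N (n+1) c d : ℝ) ≤ (N n c₁ d₁ : ℝ) + (N n c₂ d₂ : ℝ) := by
            exact_mod_cast main
      _ ≤ 2 ^ n * (d₁ - c₁) ^ s + 2 ^ n * (d₂ - c₂) ^ s :=
            add_le_add (ih c₁ d₁ (by linarith)) (ih c₂ d₂ (by linarith))
      _ = 2 ^ n * 3 ^ s * (α ^ s + β ^ s) := by
            rw [h3α, h3β, Real.mul_rpow (by norm_num) hα0,
              Real.mul_rpow (by norm_num) hβ0]; ring
      _ = 2 ^ (n+1) * (α ^ s + β ^ s) := by rw [rpow_s_3]; ring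
      _ ≤ 2 ^ (n+1) * (α + β + 1/3) ^ s := by
            have hp : (0:ℝ) < 2 ^ (n+1) := pow_pos (by norm_num) (n+1)
            nlinarith
      _ ≤ 2 ^ (n+1) * (d - c) ^ s := by
            have : (α + β + 1/3) ^ s ≤ (d - c) ^ s :=
              Real.rpow_le_rpow (by linarith) hsum s_pos.le
            have hp : (0:ℝ) < 2 ^ (n+1) := pow_pos (by norm_num) (n+1)
            nlinarith

lemma E_card_eq (n : ℕ) : (E n).card = 2 ^ n := by
  induction n with
  | zero => simp [E]
  | succ n ih =>
    have hinj1 : Function.Injective (fun a : ℝ => a/3) := fun x y h => by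
      field_simp at h; exact h
    have hinj2 : Function.Injective (fun a : ℝ => (2+a)/3) := fun x y h => by
      field_simp at h; linarith
    have hdisj : Disjoint ((E n).image (fun a => a/3)) ((E n).image (fun a => (2+a)/3)) := by
      rw [Finset.disjoint_left]
      rintro x hx1 hx2
      simp only [Finset.mem_image] at hx1 hx2
      obtain ⟨a, ha, rfl⟩ := hx1
      obtain ⟨b, hb, hba⟩ := hx2
      have h1 := (E_bounds ha).2
      have h2 := (E_bounds hb).1
      have hw := w_pos n
      have : (2+b)/3 = a/3 := hba
      have : 2 + b = a := by linarith [this]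
      linarith
    show (((E n).image (fun a => a/3)) ∪ ((E n).image (fun a => (2+a)/3))).card = 2 ^ (n+1)
    rw [Finset.card_union_of_disjoint hdisj, Finset.card_image_of_injective _ hinj1,
      Finset.card_image_of_injective _ hinj2, ih]
    ring

lemma w_rpow (n : ℕ) : w n ^ s = (2:ℝ)⁻¹ ^ n := by
  have h : w n ^ s = ((3:ℝ)⁻¹ ^ s) ^ (n:ℕ) := by
    rw [w, ← Real.rpow_natCast ((3:ℝ)⁻¹) n, ← Real.rpow_mul (by norm_num), mul_comm,
      Real.rpow_mul (by norm_num), Real.rpow_natCast]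
  rw [h, Real.inv_rpow (by norm_num), rpow_s_3]

lemma upper_bound : μH[s] cantorSet ≤ 1 := by
  have hmain := Measure.hausdorffMeasure_le_liminf_sum (X := ℝ) s cantorSet
    (l := Filter.atTop) (ι := fun n => ↑(E n))
    (fun n => ENNReal.ofReal (w n))
    ?_ (fun n a => Icc (a:ℝ) ((a:ℝ) + w n)) ?_ ?_
  · refine hmain.trans ?_
    have hbound : ∀ n : ℕ, (∑ a : ↑(E n), EMetric.diam (Icc (a:ℝ) ((a:ℝ) + w n)) ^ s) ≤ 1 := by
      intro n
      have hdiam : ∀ a : ↑(E n), EMetric.diam (Icc (a:ℝ) ((a:ℝ) + w n)) ^ s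
          = ENNReal.ofReal ((2:ℝ)⁻¹ ^ n) := by
        intro a
        unfold EMetric.diam
        rw [Real.ediam_Icc, add_sub_cancel_left,
          ENNReal.ofReal_rpow_of_pos (w_pos n), w_rpow]
      calc (∑ a : ↑(E n), EMetric.diam (Icc (a:ℝ) ((a:ℝ) + w n)) ^ s)
          = ∑ _a : ↑(E n), ENNReal.ofReal ((2:ℝ)⁻¹ ^ n) := by
            exact Finset.sum_congr rfl (fun a _ => hdiam a)
      _ = ((E n).card : ℝ≥0∞) * ENNReal.ofReal ((2:ℝ)⁻¹ ^ n) := by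
            rw [Finset.sum_const, nsmul_eq_mul, Finset.card_univ, Fintype.card_coe]
      _ = ((2:ℝ≥0∞) ^ n) * ENNReal.ofReal ((2:ℝ)⁻¹ ^ n) := by
            rw [E_card_eq]; norm_num
      _ = 1 := by
            rw [ENNReal.ofReal_pow (by norm_num), ← mul_pow]
            norm_num
            rw [show ENNReal.ofReal (1/2) = 2⁻¹ by
              rw [one_div, ENNReal.ofReal_inv_of_pos (by norm_num)]; norm_num]
            rw [ENNReal.mul_inv_cancel (by norm_num) (by norm_num), one_pow]
      _ ≤ 1 := le_rfl
    have hll : Filter.liminf (fun n => ∑ a : ↑(E n), EMetric.diam (Icc (a:ℝ) ((a:ℝ) + w n)) ^ s)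
          Filter.atTop ≤ Filter.liminf (fun _ : ℕ => (1:ℝ≥0∞)) Filter.atTop :=
      Filter.liminf_le_liminf (Filter.Eventually.of_forall hbound)
    rwa [Filter.liminf_const] at hll
  · rw [show (0:ℝ≥0∞) = ENNReal.ofReal 0 by simp]
    exact (ENNReal.continuous_ofReal.tendsto 0).comp
      (tendsto_pow_atTop_nhds_zero_of_lt_one (by norm_num) (by norm_num))
  · refine Filter.Eventually.of_forall (fun n => fun a => ?_)
    rw [Real.ediam_Icc, add_sub_cancel_left]
  · refine Filter.Eventually.of_forall (fun n => ?_)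
    intro x hx
    have := preCantorSet_subset_union n (Set.mem_iInter.1 hx n)
    obtain ⟨a, ha, h2⟩ := Set.mem_iUnion₂.1 this
    exact Set.mem_iUnion.2 ⟨⟨a, ha⟩, h2⟩

open Bornology in
lemma finite_cover_bound (F : Finset ℕ) (V : ℕ → Set ℝ)
    (hVo : ∀ i, IsOpen (V i)) (hVb : ∀ i, IsBounded (V i))
    (hcov : cantorSet ⊆ ⋃ i ∈ F, V i) :
    1 ≤ ∑ i ∈ F, (sSup (V i) - sInf (V i)) ^ s := by
  classical
  -- Lebesgue number
  obtain ⟨δ, hδ, hleb⟩ := lebesgue_number_lemma_of_metric (c := fun i : F => V i)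
    isCompact_cantorSet (fun i => hVo i) (by
      intro x hx
      obtain ⟨i, hiF, hxi⟩ := Set.mem_iUnion₂.1 (hcov hx)
      exact Set.mem_iUnion.2 ⟨⟨i, hiF⟩, hxi⟩)
  -- choose n with w n < δ
  obtain ⟨n, hn⟩ : ∃ n, w n < δ :=
    exists_pow_lt_of_lt_one hδ (by norm_num : (3:ℝ)⁻¹ < 1)
  set c : ℕ → ℝ := fun i => sInf (V i) with hc
  set d : ℕ → ℝ := fun i => sSup (V i) with hd
  -- each a in E n fits in some V i
  have hfit : ∀ a ∈ E n, ∃ i ∈ F, c i ≤ a ∧ a + w n ≤ d i := by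
    intro a ha
    obtain ⟨i, hball⟩ := hleb a (E_mem_cantorSet ha)
    have hsub : Icc a (a + w n) ⊆ V i := by
      intro x hx
      apply hball
      rw [Metric.mem_ball, Real.dist_eq, abs_sub_lt_iff]
      constructor <;> [linarith [hx.2, w_pos n]; linarith [hx.1, w_pos n]]
    refine ⟨i, i.2, ?_, ?_⟩
    · exact csInf_le (hVb i).bddBelow (hsub ⟨le_rfl, by linarith [w_pos n]⟩)
    · exact le_csSup (hVb i).bddAbove (hsub ⟨by linarith [w_pos n], le_rfl⟩)
  -- counting
  have hsubset : E n ⊆ F.biUnion (fun i => (E n).filter (fun a => c i ≤ a ∧ a + w n ≤ d i)) := by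
    intro a ha
    obtain ⟨i, hiF, h1, h2⟩ := hfit a ha
    exact Finset.mem_biUnion.2 ⟨i, hiF, Finset.mem_filter.2 ⟨ha, h1, h2⟩⟩
  have hcount : (2:ℝ) ^ n ≤ ∑ i ∈ F, (N n (c i) (d i) : ℝ) := by
    have h1 : (2:ℕ) ^ n ≤ ∑ i ∈ F, N n (c i) (d i) := by
      calc (2:ℕ) ^ n = (E n).card := (E_card_eq n).symm
      _ ≤ (F.biUnion (fun i => (E n).filter (fun a => c i ≤ a ∧ a + w n ≤ d i))).card :=
          Finset.card_le_card hsubset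
      _ ≤ ∑ i ∈ F, N n (c i) (d i) := by
          refine (Finset.card_biUnion_le).trans ?_
          apply le_of_eq
          exact Finset.sum_congr rfl (fun i _ => by rw [N])
    exact_mod_cast h1
  have hcd : ∀ i, c i ≤ d i := by
    intro i
    rcases Set.eq_empty_or_nonempty (V i) with h | h
    · simp [hc, hd, h, Real.sInf_empty, Real.sSup_empty]
    · exact Real.sInf_le_sSup _ (hVb i).bddBelow (hVb i).bddAbove
  have hstep : ∑ i ∈ F, (N n (c i) (d i) : ℝ) ≤ 2 ^ n * ∑ i ∈ F, (d i - c i) ^ s := by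
    rw [Finset.mul_sum]
    exact Finset.sum_le_sum (fun i _ => count_le n (c i) (d i) (hcd i))
  have hp : (0:ℝ) < 2 ^ n := by positivity
  nlinarith

lemma cover_sum_ge (t : ℕ → Set ℝ) (hcov : cantorSet ⊆ ⋃ n, t n) :
    1 ≤ ∑' n, EMetric.diam (t n) ^ s := by
  classical
  by_cases htop : ∃ n, EMetric.diam (t n) = ⊤
  · obtain ⟨n, hn⟩ := htop
    refine le_trans ?_ (ENNReal.le_tsum n)
    rw [hn, ENNReal.top_rpow_of_pos s_pos]
    exact le_top
  push_neg at htop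
  have hbdd : ∀ n, Bornology.IsBounded (t n) := fun n =>
    Metric.isBounded_iff_ediam_ne_top.2 (htop n)
  apply ENNReal.le_of_forall_pos_le_add
  intro ε hε _
  -- radii
  set η : ℕ → ℝ := fun n => ((ε:ℝ) * (2:ℝ)⁻¹ ^ (n+1)) ^ s⁻¹ with hη
  have hηpos : ∀ n, 0 < η n := fun n => by
    apply Real.rpow_pos_of_pos
    positivity
  set V : ℕ → Set ℝ := fun n => Metric.thickening ((η n)/2) (t n) with hV
  have hVo : ∀ n, IsOpen (V n) := fun n => Metric.isOpen_thickening
  have hVb : ∀ n, Bornology.IsBounded (V n) := fun n => (hbdd n).thickening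
  have hsub : ∀ n, t n ⊆ V n := fun n =>
    Metric.self_subset_thickening (by linarith [hηpos n]) _
  have hcov' : cantorSet ⊆ ⋃ n, V n :=
    hcov.trans (Set.iUnion_mono hsub)
  obtain ⟨F, hF⟩ := isCompact_cantorSet.elim_finite_subcover V hVo hcov'
  have hfin := finite_cover_bound F V hVo hVb hF
  have hVcd : ∀ i, (0:ℝ) ≤ sSup (V i) - sInf (V i) := by
    intro i
    rcases Set.eq_empty_or_nonempty (V i) with h | h
    · simp [h, Real.sInf_empty, Real.sSup_empty]
    · linarith [Real.sInf_le_sSup _ (hVb i).bddBelow (hVb i).bddAbove]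
  have step1 : (1:ℝ≥0∞) ≤ ∑ i ∈ F, (EMetric.diam (V i)) ^ s := by
    calc (1:ℝ≥0∞) = ENNReal.ofReal 1 := by simp
    _ ≤ ENNReal.ofReal (∑ i ∈ F, (sSup (V i) - sInf (V i)) ^ s) := ENNReal.ofReal_le_ofReal hfin
    _ = ∑ i ∈ F, ENNReal.ofReal ((sSup (V i) - sInf (V i)) ^ s) :=
        ENNReal.ofReal_sum_of_nonneg (fun i _ => Real.rpow_nonneg (hVcd i) s)
    _ = ∑ i ∈ F, (EMetric.diam (V i)) ^ s := by
        refine Finset.sum_congr rfl (fun i _ => ?_)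
        unfold EMetric.diam
        rw [Real.ediam_eq (hVb i), ← ENNReal.ofReal_rpow_of_nonneg (hVcd i) s_pos.le]
  have step2 : ∀ i : ℕ, (EMetric.diam (V i)) ^ s
      ≤ (EMetric.diam (t i)) ^ s + ENNReal.ofReal ((ε:ℝ) * (2:ℝ)⁻¹ ^ (i+1)) := by
    intro i
    have hrad : (0:ℝ) ≤ η i / 2 := by linarith [hηpos i]
    have hdV : EMetric.diam (V i) ≤ EMetric.diam (t i) + ENNReal.ofReal (η i) := by
      have h1 : V i = Metric.thickening (((η i / 2).toNNReal : ℝ)) (t i) := by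
        rw [Real.coe_toNNReal _ hrad]
      rw [h1]
      refine (Metric.ediam_thickening_le _).trans ?_
      have h2 : 2 * ((η i / 2).toNNReal : ℝ≥0∞) = ENNReal.ofReal (η i) := by
        rw [show ((η i / 2).toNNReal : ℝ≥0∞) = ENNReal.ofReal (η i / 2) from rfl,
          show (2:ℝ≥0∞) = ENNReal.ofReal 2 by norm_num,
          ← ENNReal.ofReal_mul (by norm_num)]
        congr 1
        ring
      rw [h2]
      exact le_rfl
    calc (EMetric.diam (V i)) ^ s ≤ (EMetric.diam (t i) + ENNReal.ofReal (η i)) ^ s :=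
        ENNReal.rpow_le_rpow hdV s_pos.le
    _ ≤ (EMetric.diam (t i)) ^ s + (ENNReal.ofReal (η i)) ^ s :=
        ENNReal.rpow_add_le_add_rpow _ _ s_pos.le s_le_one
    _ = (EMetric.diam (t i)) ^ s + ENNReal.ofReal ((ε:ℝ) * (2:ℝ)⁻¹ ^ (i+1)) := by
        rw [ENNReal.ofReal_rpow_of_nonneg (le_of_lt (hηpos i)) s_pos.le]
        congr 1
        rw [hη]
        rw [Real.rpow_inv_rpow (by positivity) s_pos.ne']
  have step3 : ∑' n, ENNReal.ofReal ((ε:ℝ) * (2:ℝ)⁻¹ ^ (n+1)) = (ε : ℝ≥0∞) := by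
    have hterm : ∀ n : ℕ, ENNReal.ofReal ((ε:ℝ) * (2:ℝ)⁻¹ ^ (n+1))
        = ((2:ℝ≥0∞)⁻¹) ^ n * ((ε : ℝ≥0∞) * 2⁻¹) := by
      intro n
      rw [ENNReal.ofReal_mul (by positivity), ENNReal.ofReal_coe_nnreal, ENNReal.ofReal_pow (by norm_num),
        show ENNReal.ofReal (2:ℝ)⁻¹ = (2:ℝ≥0∞)⁻¹ by
          rw [ENNReal.ofReal_inv_of_pos (by norm_num)]; norm_num,
        pow_succ]
      ring
    rw [tsum_congr hterm, ENNReal.tsum_mul_right, ENNReal.tsum_geometric]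
    rw [show (1:ℝ≥0∞) - 2⁻¹ = 2⁻¹ from ENNReal.one_sub_inv_two]
    rw [inv_inv]
    calc 2 * ((ε:ℝ≥0∞) * 2⁻¹) = (ε:ℝ≥0∞) * (2 * 2⁻¹) := by ring
    _ = (ε:ℝ≥0∞) := by rw [ENNReal.mul_inv_cancel (by norm_num) (by norm_num), mul_one]
  calc (1:ℝ≥0∞) ≤ ∑ i ∈ F, (EMetric.diam (V i)) ^ s := step1
  _ ≤ ∑ i ∈ F, ((EMetric.diam (t i)) ^ s + ENNReal.ofReal ((ε:ℝ) * (2:ℝ)⁻¹ ^ (i+1))) :=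
      Finset.sum_le_sum (fun i _ => step2 i)
  _ = (∑ i ∈ F, (EMetric.diam (t i)) ^ s)
      + ∑ i ∈ F, ENNReal.ofReal ((ε:ℝ) * (2:ℝ)⁻¹ ^ (i+1)) := Finset.sum_add_distrib
  _ ≤ (∑' n, (EMetric.diam (t n)) ^ s) + ∑' n, ENNReal.ofReal ((ε:ℝ) * (2:ℝ)⁻¹ ^ (n+1)) :=
      add_le_add (ENNReal.sum_le_tsum F) (ENNReal.sum_le_tsum F)
  _ = (∑' n, (EMetric.diam (t n)) ^ s) + ε := by rw [step3]

lemma lower_bound : 1 ≤ μH[s] cantorSet := by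
  rw [Measure.hausdorffMeasure_apply]
  refine le_iSup₂_of_le 1 zero_lt_one ?_
  refine le_iInf fun t => le_iInf fun hcov => le_iInf fun _ => ?_
  have heq : ∀ n : ℕ, (⨆ _ : (t n).Nonempty, EMetric.diam (t n) ^ s) = EMetric.diam (t n) ^ s := by
    intro n
    rcases Set.eq_empty_or_nonempty (t n) with h | h
    · simp [h, EMetric.diam, ENNReal.zero_rpow_of_pos s_pos]
    · rw [iSup_pos h]
  simp only [EMetric.diam] at heq ⊢
  rw [tsum_congr heq]
  exact cover_sum_ge t hcov

end CantorAux

theorem hausdorff_measure_cantorSet :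
    μH[Real.log 2 / Real.log 3] cantorSet = 1 := by
  rw [show Real.log 2 / Real.log 3 = CantorAux.s from rfl]
  exact le_antisymm CantorAux.upper_bound CantorAux.lower_bound
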